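/- Fix d ≥ 1, constants L > 0, M ≥ 0, an integer n ≥ 1, and a finite measure Π on a measurable space U. Let ψ : ℝ → ℝ be twice continuously differentiable with |ψ'(r)| ≤ 1 for all r ∈ ℝ and 0 ≤ ψ''(r) ≤ 2/(L n r²) for all r ≠ 0. Let x = (x₁,x₂), y = (y₁,y₂) ∈ ℝ^d × ℝ^d with x ≠ y and x₂ ≠ y₂, and set |x−y| = (|x₁−y₁|² + |x₂−y₂|²)^{1/2}. Let b₁, b₂ ∈ ℝ^d and d×d real matrices σ₁, σ₂ satisfy |b₁−b₂|² + ‖σ₁−σ₂‖² ≤ L|x−y|², let g : U → ℝ^d be measurable with ∫_U |g(u)|² Π(du) ≤ L|x−y|², and let (r_i)_{i∈ℕ} be nonnegative reals with ∑_{i∈ℕ} r_i ≤ M|x−y|. Put Ā = |(σ₁−σ₂)ᵀ(x₂−y₂)|²/|x₂−y₂|². Then (1/2)(ψ'(|x−y|)/|x−y|)[‖σ₁−σ₂‖² − Ā + 2⟨x₂−y₂, b₁−b₂⟩ + 2⟨x₁−y₁, x₂−y₂⟩] + (1/2)ψ''(|x−y|) Ā + ∫_U [ψ((|x₁−y₁|²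 + |x₂−y₂+g(u)|²)^{1/2}) − ψ(|x−y|)] Π(du) + ∑_{i∈ℕ} r_i ≤ 1/n + (L + 1 + (Π(U)L)^{1/2} + M)·|x−y|. -/

import Mathlib

open MeasureTheory

/-- Euclidean norm of a vector in `ℝ^d`. -/
noncomputable def eucNorm {d : ℕ} (v : Fin d → ℝ) : ℝ := Real.sqrt (∑ i, v i ^ 2)

/-- Euclidean inner product in `ℝ^d`. -/
noncomputable def eucInner {d : ℕ} (v w : Fin d → ℝ) : ℝ := ∑ i, v i * w i

/-- Frobenius norm of a `d × d` real matrix. -/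
noncomputable def frobNorm {d : ℕ} (A : Matrix (Fin d) (Fin d) ℝ) : ℝ :=
  Real.sqrt (∑ i, ∑ j, A i j ^ 2)


lemma abs_le_of_sq_le' {a b : ℝ} (hb : 0 ≤ b) (h : a ^ 2 ≤ b ^ 2) : |a| ≤ b := by
  have := Real.sqrt_le_sqrt h
  rwa [Real.sqrt_sq_eq_abs, Real.sqrt_sq hb] at this

lemma eucNorm_nonneg {d : ℕ} (v : Fin d → ℝ) : 0 ≤ eucNorm v := Real.sqrt_nonneg _

lemma eucNorm_sq {d : ℕ} (v : Fin d → ℝ) : eucNorm v ^ 2 = ∑ i, v i ^ 2 :=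
  Real.sq_sqrt (Finset.sum_nonneg fun i _ => sq_nonneg _)

lemma eucNorm_pos {d : ℕ} {v : Fin d → ℝ} (hv : v ≠ 0) : 0 < eucNorm v := by
  obtain ⟨i, hi⟩ := Function.ne_iff.mp hv
  refine Real.sqrt_pos.mpr (Finset.sum_pos' (fun j _ => sq_nonneg _) ⟨i, Finset.mem_univ i, ?_⟩)
  have : v i ≠ 0 := hi
  positivity

lemma abs_eucInner_le {d : ℕ} (v w : Fin d → ℝ) : |eucInner v w| ≤ eucNorm v * eucNorm w := by
  refine abs_le_of_sq_le' (mul_nonneg (eucNorm_nonneg v) (eucNorm_nonneg w)) ?_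
  rw [mul_pow, eucNorm_sq, eucNorm_sq]
  exact Finset.sum_mul_sq_le_sq_mul_sq Finset.univ v w

lemma eucNorm_add_sub_le {d : ℕ} (z g : Fin d → ℝ) :
    |eucNorm (z + g) - eucNorm z| ≤ eucNorm g := by
  refine abs_le_of_sq_le' (eucNorm_nonneg g) ?_
  have hCS : eucInner z (z + g) ≤ eucNorm z * eucNorm (z + g) :=
    (le_abs_self _).trans (abs_eucInner_le _ _)
  have h1 : eucNorm (z + g) ^ 2 = eucNorm z ^ 2 + 2 * eucInner z g + eucNorm g ^ 2 := by
    simp only [eucNorm_sq, eucInner, Pi.add_apply, add_sq, Finset.sum_add_distrib,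
      Finset.mul_sum, mul_assoc]
  have h2 : eucInner z (z + g) = eucNorm z ^ 2 + eucInner z g := by
    have : eucNorm z * eucNorm z = ∑ x : Fin d, z x * z x := by
      rw [← sq, eucNorm_sq]; exact Finset.sum_congr rfl fun i _ => sq (z i) ▸ rfl
    simp only [eucInner, Pi.add_apply, mul_add, Finset.sum_add_distrib, eucNorm_sq, sq, this]
  nlinarith [eucNorm_nonneg z, eucNorm_nonneg (z + g)]

lemma frobNorm_sq {d : ℕ} (A : Matrix (Fin d) (Fin d) ℝ) :
    frobNorm A ^ 2 = ∑ i, ∑ j, A i j ^ 2 :=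
  Real.sq_sqrt (Finset.sum_nonneg fun i _ => Finset.sum_nonneg fun j _ => sq_nonneg _)

lemma mulVec_sq_le {d : ℕ} (A : Matrix (Fin d) (Fin d) ℝ) (z : Fin d → ℝ) :
    eucNorm (A.transpose.mulVec z) ^ 2 ≤ frobNorm A ^ 2 * eucNorm z ^ 2 := by
  rw [eucNorm_sq, frobNorm_sq, eucNorm_sq,
    show (∑ i, ∑ j, A i j ^ 2) = ∑ j, ∑ i, A i j ^ 2 by rw [Finset.sum_comm], Finset.sum_mul]
  refine Finset.sum_le_sum fun j _ => ?_
  have : A.transpose.mulVec z j = ∑ i, z i * A i j := by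
    simp [Matrix.mulVec, dotProduct, Matrix.transpose, mul_comm]
  rw [this]
  calc (∑ i, z i * A i j) ^ 2 ≤ (∑ i, z i ^ 2) * ∑ i, A i j ^ 2 :=
        Finset.sum_mul_sq_le_sq_mul_sq Finset.univ _ _
    _ = (∑ i, A i j ^ 2) * ∑ i, z i ^ 2 := mul_comm _ _

lemma sqrt_add_sq_lip {c a b : ℝ} (hc : 0 ≤ c) (ha : 0 ≤ a) (hb : 0 ≤ b) :
    |Real.sqrt (c + a ^ 2) - Real.sqrt (c + b ^ 2)| ≤ |a - b| := by
  set s := Real.sqrt (c + a ^ 2) with hsdef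
  set t := Real.sqrt (c + b ^ 2) with htdef
  have hs : s ^ 2 = c + a ^ 2 := Real.sq_sqrt (by positivity)
  have ht : t ^ 2 = c + b ^ 2 := Real.sq_sqrt (by positivity)
  have hs0 : 0 ≤ s := Real.sqrt_nonneg _
  have ht0 : 0 ≤ t := Real.sqrt_nonneg _
  have h2 : (c + a * b) ^ 2 ≤ (s * t) ^ 2 := by
    have : (s * t) ^ 2 = (c + a ^ 2) * (c + b ^ 2) := by rw [mul_pow, hs, ht]
    rw [this]; nlinarith [mul_nonneg hc (sq_nonneg (a - b))]
  have key : c + a * b ≤ s * t :=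
    (le_abs_self _).trans (abs_le_of_sq_le' (mul_nonneg hs0 ht0) h2)
  refine abs_le_of_sq_le' (abs_nonneg _) ?_
  rw [sq_abs]; nlinarith

lemma continuous_eucNorm {d : ℕ} : Continuous (eucNorm (d := d)) := by
  unfold eucNorm
  exact Real.continuous_sqrt.comp (continuous_finset_sum _ fun i _ => (continuous_apply i).pow 2)


set_option maxHeartbeats 1000000 in
/-- The explicit analytic form of Lemma 3.3: the coupling operator applied
to the test function `f_n = ψ_n(|x - y|) + 1_{k≠l}` at `(x,k,y,k)` is bounded by
`1/n + (L + 1 + (Π(U)L)^{1/2} + M)·|x - y|`. -/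
theorem coupling_operator_estimate
    {d : ℕ} (hd : 1 ≤ d) (L M : ℝ) (hL : 0 < L) (hM : 0 ≤ M) (n : ℕ) (hn : 1 ≤ n)
    {U : Type*} [MeasurableSpace U] (ν : Measure U) [IsFiniteMeasure ν]
    (ψ : ℝ → ℝ) (hψ : ContDiff ℝ 2 ψ)
    (hψ' : ∀ r : ℝ, |deriv ψ r| ≤ 1)
    (hψ'' : ∀ r : ℝ, r ≠ 0 →
      0 ≤ deriv (deriv ψ) r ∧ deriv (deriv ψ) r ≤ 2 / (L * n * r ^ 2))
    (x₁ x₂ y₁ y₂ : Fin d → ℝ)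
    (hxy : (x₁, x₂) ≠ (y₁, y₂)) (hx₂y₂ : x₂ ≠ y₂)
    (b₁ b₂ : Fin d → ℝ) (σ₁ σ₂ : Matrix (Fin d) (Fin d) ℝ)
    (hLip : eucNorm (b₁ - b₂) ^ 2 + frobNorm (σ₁ - σ₂) ^ 2
      ≤ L * Real.sqrt (eucNorm (x₁ - y₁) ^ 2 + eucNorm (x₂ - y₂) ^ 2) ^ 2)
    (g : U → Fin d → ℝ) (hg : Measurable g)
    (hg2 : Integrable (fun u => eucNorm (g u) ^ 2) ν)
    (hgL : ∫ u, eucNorm (g u) ^ 2 ∂ν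
      ≤ L * Real.sqrt (eucNorm (x₁ - y₁) ^ 2 + eucNorm (x₂ - y₂) ^ 2) ^ 2)
    (r : ℕ → ℝ) (hr0 : ∀ i, 0 ≤ r i) (hrsum : Summable r)
    (hrbd : ∑' i, r i
      ≤ M * Real.sqrt (eucNorm (x₁ - y₁) ^ 2 + eucNorm (x₂ - y₂) ^ 2)) :
    (1 / 2) * (deriv ψ (Real.sqrt (eucNorm (x₁ - y₁) ^ 2 + eucNorm (x₂ - y₂) ^ 2))
        / Real.sqrt (eucNorm (x₁ - y₁) ^ 2 + eucNorm (x₂ - y₂) ^ 2))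
      * (frobNorm (σ₁ - σ₂) ^ 2
          - eucNorm ((σ₁ - σ₂).transpose.mulVec (x₂ - y₂)) ^ 2 / eucNorm (x₂ - y₂) ^ 2
          + 2 * eucInner (x₂ - y₂) (b₁ - b₂) + 2 * eucInner (x₁ - y₁) (x₂ - y₂))
    + (1 / 2) * deriv (deriv ψ) (Real.sqrt (eucNorm (x₁ - y₁) ^ 2 + eucNorm (x₂ - y₂) ^ 2))
      * (eucNorm ((σ₁ - σ₂).transpose.mulVec (x₂ - y₂)) ^ 2 / eucNorm (x₂ - y₂) ^ 2)
    + (∫ u, (ψ (Real.sqrt (eucNorm (x₁ - y₁) ^ 2 + eucNorm (x₂ - y₂ + g u) ^ 2))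
        - ψ (Real.sqrt (eucNorm (x₁ - y₁) ^ 2 + eucNorm (x₂ - y₂) ^ 2))) ∂ν)
    + (∑' i, r i)
    ≤ 1 / n + (L + 1 + Real.sqrt ((ν Set.univ).toReal * L) + M)
        * Real.sqrt (eucNorm (x₁ - y₁) ^ 2 + eucNorm (x₂ - y₂) ^ 2) := by
  set w := x₁ - y₁ with hwdef
  set z := x₂ - y₂ with hzdef
  have hz : z ≠ 0 := sub_ne_zero.mpr hx₂y₂
  have hZ : 0 < eucNorm z := eucNorm_pos hz
  set ρ := Real.sqrt (eucNorm w ^ 2 + eucNorm z ^ 2) with hρdef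
  have hsum_pos : 0 < eucNorm w ^ 2 + eucNorm z ^ 2 := by positivity
  have hρ : 0 < ρ := Real.sqrt_pos.mpr hsum_pos
  have hρsq : ρ ^ 2 = eucNorm w ^ 2 + eucNorm z ^ 2 := Real.sq_sqrt hsum_pos.le
  set S := frobNorm (σ₁ - σ₂) ^ 2 with hSdef
  have hS0 : 0 ≤ S := sq_nonneg _
  have hS : S ≤ L * ρ ^ 2 := by nlinarith [sq_nonneg (eucNorm (b₁ - b₂))]
  have hB : eucNorm (b₁ - b₂) ≤ Real.sqrt L * ρ := by
    have hsq : eucNorm (b₁ - b₂) ^ 2 ≤ (Real.sqrt L * ρ) ^ 2 := by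
      rw [mul_pow, Real.sq_sqrt hL.le]; linarith [hS0, hLip]
    have := abs_le_of_sq_le' (by positivity) hsq
    rwa [abs_of_nonneg (eucNorm_nonneg _)] at this
  set A := eucNorm ((σ₁ - σ₂).transpose.mulVec z) ^ 2 / eucNorm z ^ 2 with hAdef
  have hA0 : 0 ≤ A := by positivity
  have hAS : A ≤ S := by
    rw [hAdef, div_le_iff₀ (by positivity)]
    exact mulVec_sq_le _ _
  have hZρ : eucNorm z ≤ ρ := by
    have h1 : eucNorm z ^ 2 ≤ ρ ^ 2 := by nlinarith [sq_nonneg (eucNorm w)]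
    have := abs_le_of_sq_le' hρ.le h1
    rwa [abs_of_nonneg (eucNorm_nonneg _)] at this
  have hI1 : |eucInner z (b₁ - b₂)| ≤ Real.sqrt L * ρ ^ 2 := by
    calc |eucInner z (b₁ - b₂)| ≤ eucNorm z * eucNorm (b₁ - b₂) := abs_eucInner_le _ _
      _ ≤ ρ * (Real.sqrt L * ρ) := mul_le_mul hZρ hB (eucNorm_nonneg _) hρ.le
      _ = Real.sqrt L * ρ ^ 2 := by ring
  have hI2 : |eucInner w z| ≤ ρ ^ 2 / 2 := by
    calc |eucInner w z| ≤ eucNorm w * eucNorm z := abs_eucInner_le _ _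
      _ ≤ ρ ^ 2 / 2 := by nlinarith [sq_nonneg (eucNorm w - eucNorm z)]
  have hE : |S - A + 2 * eucInner z (b₁ - b₂) + 2 * eucInner w z|
      ≤ L * ρ ^ 2 + 2 * (Real.sqrt L * ρ ^ 2) + ρ ^ 2 := by
    have h1 : |S - A| ≤ L * ρ ^ 2 := by
      rw [abs_of_nonneg (by linarith)]; linarith
    calc |S - A + 2 * eucInner z (b₁ - b₂) + 2 * eucInner w z|
        ≤ |S - A + 2 * eucInner z (b₁ - b₂)| + |2 * eucInner w z| := abs_add_le _ _
      _ ≤ |S - A| + |2 * eucInner z (b₁ - b₂)| + |2 * eucInner w z| := by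
          linarith [abs_add_le (S - A) (2 * eucInner z (b₁ - b₂))]
      _ ≤ L * ρ ^ 2 + 2 * (Real.sqrt L * ρ ^ 2) + ρ ^ 2 := by
          rw [abs_mul, abs_mul, abs_two]
          linarith [hI1, hI2, h1]
  have hT1 : (1 / 2) * (deriv ψ ρ / ρ)
        * (S - A + 2 * eucInner z (b₁ - b₂) + 2 * eucInner w z) ≤ (L + 1) * ρ := by
    calc (1 / 2) * (deriv ψ ρ / ρ) * (S - A + 2 * eucInner z (b₁ - b₂) + 2 * eucInner w z)
        ≤ |(1 / 2) * (deriv ψ ρ / ρ) * (S - A + 2 * eucInner z (b₁ - b₂) + 2 * eucInner w z)| :=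
          le_abs_self _
      _ = (1 / 2) * (|deriv ψ ρ| / ρ)
          * |S - A + 2 * eucInner z (b₁ - b₂) + 2 * eucInner w z| := by
          rw [abs_mul, abs_mul, abs_div (deriv ψ ρ), abs_of_pos hρ]; norm_num
      _ ≤ (1 / 2) * (1 / ρ) * (L * ρ ^ 2 + 2 * (Real.sqrt L * ρ ^ 2) + ρ ^ 2) := by
          have h1 : |deriv ψ ρ| / ρ ≤ 1 / ρ := (div_le_div_iff_of_pos_right hρ).mpr (hψ' ρ)
          exact mul_le_mul (mul_le_mul_of_nonneg_left h1 (by norm_num)) hE (abs_nonneg _)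
            (by positivity)
      _ ≤ (L + 1) * ρ := by
          rw [show (1 / 2 : ℝ) * (1 / ρ) * (L * ρ ^ 2 + 2 * (Real.sqrt L * ρ ^ 2) + ρ ^ 2)
              = (L + 2 * Real.sqrt L + 1) * ρ ^ 2 / (2 * ρ) by ring,
            div_le_iff₀ (by positivity)]
          nlinarith [mul_nonneg (sq_nonneg (Real.sqrt L - 1)) (sq_nonneg ρ),
            Real.sq_sqrt hL.le, hρ]
  obtain ⟨hψ''0, hψ''2⟩ := hψ'' ρ hρ.ne'
  have hn' : (0 : ℝ) < n := by exact_mod_cast Nat.lt_of_lt_of_le Nat.zero_lt_one hn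
  have hALρ : A ≤ L * ρ ^ 2 := hAS.trans hS
  have hT2 : (1 / 2) * deriv (deriv ψ) ρ * A ≤ 1 / (n : ℝ) := by
    calc (1 / 2) * deriv (deriv ψ) ρ * A
        ≤ (1 / 2) * (2 / (L * n * ρ ^ 2)) * (L * ρ ^ 2) := by
          exact mul_le_mul (mul_le_mul_of_nonneg_left hψ''2 (by norm_num)) hALρ hA0
            (by positivity)
      _ = 1 / (n : ℝ) := by field_simp
  -- Lipschitz bound for ψ
  have hlip : ∀ a b : ℝ, |ψ a - ψ b| ≤ |a - b| := by
    have hdiff : Differentiable ℝ ψ := hψ.differentiable (by norm_num)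
    have hl : LipschitzWith 1 ψ := lipschitzWith_of_nnnorm_deriv_le hdiff (fun x => by
      rw [← NNReal.coe_le_coe, coe_nnnorm, Real.norm_eq_abs, NNReal.coe_one]; exact hψ' x)
    intro a b
    have := hl.dist_le_mul a b
    simpa [Real.dist_eq] using this
  have hpt : ∀ u, |ψ (Real.sqrt (eucNorm w ^ 2 + eucNorm (z + g u) ^ 2)) - ψ ρ|
      ≤ eucNorm (g u) := by
    intro u
    calc |ψ (Real.sqrt (eucNorm w ^ 2 + eucNorm (z + g u) ^ 2)) - ψ ρ|
        ≤ |Real.sqrt (eucNorm w ^ 2 + eucNorm (z + g u) ^ 2) - ρ| := hlip _ _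
      _ ≤ |eucNorm (z + g u) - eucNorm z| := by
          rw [hρdef]
          exact sqrt_add_sq_lip (sq_nonneg _) (eucNorm_nonneg _) (eucNorm_nonneg _)
      _ ≤ eucNorm (g u) := eucNorm_add_sub_le _ _
  have hmeas : Measurable fun u => ψ (Real.sqrt (eucNorm w ^ 2 + eucNorm (z + g u) ^ 2)) - ψ ρ := by
    apply Measurable.sub _ measurable_const
    exact (hψ.continuous.measurable).comp
      (Real.continuous_sqrt.measurable.comp
        (measurable_const.add
          ((continuous_eucNorm.measurable.comp (measurable_const.add hg)).pow_const 2)))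
  have hgN : Integrable (fun u => eucNorm (g u)) ν := by
    have hb : Integrable (fun u => (1 + eucNorm (g u) ^ 2) / 2) ν :=
      ((integrable_const 1).add hg2).div_const 2
    refine hb.mono' (continuous_eucNorm.measurable.comp hg).aestronglyMeasurable ?_
    filter_upwards with u
    rw [Real.norm_eq_abs, abs_of_nonneg (eucNorm_nonneg _)]
    nlinarith [sq_nonneg (eucNorm (g u) - 1)]
  have hhInt : Integrable (fun u => ψ (Real.sqrt (eucNorm w ^ 2 + eucNorm (z + g u) ^ 2)) - ψ ρ) ν := by
    refine hgN.mono' hmeas.aestronglyMeasurable ?_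
    filter_upwards with u
    rw [Real.norm_eq_abs]
    exact hpt u
  set c := (ν Set.univ).toReal with hcdef
  have hc0 : 0 ≤ c := ENNReal.toReal_nonneg
  have hint1 : (∫ u, (ψ (Real.sqrt (eucNorm w ^ 2 + eucNorm (z + g u) ^ 2)) - ψ ρ) ∂ν)
      ≤ ∫ u, eucNorm (g u) ∂ν :=
    integral_mono hhInt hgN fun u => (le_abs_self _).trans (hpt u)
  have hint2 : (∫ u, eucNorm (g u) ∂ν) ≤ Real.sqrt (c * L) * ρ := by
    rcases eq_or_lt_of_le hc0 with hc | hc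
    · have hν : ν = 0 := by
        refine Measure.measure_univ_eq_zero.mp ?_
        have hfin : ν Set.univ ≠ ⊤ := measure_ne_top ν Set.univ
        exact ((ENNReal.toReal_eq_zero_iff _).mp hc.symm).resolve_right hfin
      rw [hν]
      simp only [integral_zero_measure]
      positivity
    · set a := ρ * Real.sqrt L / Real.sqrt c with hadef
      have hsL : 0 < Real.sqrt L := Real.sqrt_pos.mpr hL
      have hsc : 0 < Real.sqrt c := Real.sqrt_pos.mpr hc
      have hLs : Real.sqrt L ^ 2 = L := Real.sq_sqrt hL.le
      have hcs : Real.sqrt c ^ 2 = c := Real.sq_sqrt hc0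
      have ha : 0 < a := by positivity
      have hptw : ∀ u, eucNorm (g u) ≤ (a ^ 2 + eucNorm (g u) ^ 2) / (2 * a) := by
        intro u
        rw [le_div_iff₀ (by positivity)]
        nlinarith [sq_nonneg (eucNorm (g u) - a)]
      have hIb : Integrable (fun u => (a ^ 2 + eucNorm (g u) ^ 2) / (2 * a)) ν :=
        ((integrable_const (a ^ 2)).add hg2).div_const _
      have h1 : (∫ u, eucNorm (g u) ∂ν) ≤ ∫ u, (a ^ 2 + eucNorm (g u) ^ 2) / (2 * a) ∂ν :=
        integral_mono hgN hIb hptw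
      have h2 : (∫ u, (a ^ 2 + eucNorm (g u) ^ 2) / (2 * a) ∂ν)
          = (a ^ 2 * c + ∫ u, eucNorm (g u) ^ 2 ∂ν) / (2 * a) := by
        rw [integral_div, integral_add (integrable_const _) hg2, integral_const, smul_eq_mul,
          mul_comm]
        rfl
      have key : a ^ 2 * c = L * ρ ^ 2 := by
        have ha2 : a ^ 2 = ρ ^ 2 * L / c := by
          rw [hadef, div_pow, mul_pow, hLs, hcs]
        rw [ha2]
        field_simp
      have h3 : (a ^ 2 * c + ∫ u, eucNorm (g u) ^ 2 ∂ν) / (2 * a)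
          ≤ (a ^ 2 * c + L * ρ ^ 2) / (2 * a) :=
        (div_le_div_iff_of_pos_right (by positivity)).mpr (by linarith [hgL])
      have h4 : (a ^ 2 * c + L * ρ ^ 2) / (2 * a) = Real.sqrt (c * L) * ρ := by
        rw [key, Real.sqrt_mul hc0, hadef]
        field_simp
        linear_combination (-2) * hLs
      linarith
  have hexp : (L + 1 + Real.sqrt (c * L) + M) * ρ
      = (L + 1) * ρ + Real.sqrt (c * L) * ρ + M * ρ := by ring
  linarith [hT1, hT2, hint1, hint2, hrbd]
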